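/- Let p > 3 be a prime and n, k integers coprime to p. Then ∑_{ψ ≠ χ₀} |∑_{m=1}^{p-1} ψ(m)·|∑_{a=1}^{p-1} χ₀(m·a + n·ā)·e(k·a/p)|²|² = 6p² - 31p + 16, where the outer sum is over all non-principal Dirichlet characters ψ mod p. -/

import Mathlib

open Finset Complex

/-- `e p x = e^{2πi x/p}` for `x : ZMod p`. -/
noncomputable def e (p : ℕ) [NeZero p] (x : ZMod p) : ℂ :=
  Complex.exp (2 * Real.pi * Complex.I * x.val / p)

/-- Gauss sum `τ(f) = ∑_{a mod p} f(a) e^{2πia/p}` associated to `f : ZMod p → ℂ`. -/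
noncomputable def gaussSum' (p : ℕ) [NeZero p] (f : ZMod p → ℂ) : ℂ :=
  ∑ a : ZMod p, f a * e p a

/-- The Legendre symbol character mod `p`, with complex values. -/
noncomputable def legChar (p : ℕ) [Fact p.Prime] : DirichletCharacter ℂ p :=
  (quadraticChar (ZMod p)).ringHomComp (Int.castRingHom ℂ)

variable {p : ℕ} [Fact p.Prime]

lemma e_eq (x : ZMod p) : e p x = ZMod.stdAddChar x := by
  rw [ZMod.stdAddChar_apply, ZMod.toCircle_apply, e]

lemma e_zero : e p (0 : ZMod p) = 1 := by rw [e_eq]; exact AddChar.map_zero_eq_one _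

lemma e_add (x y : ZMod p) : e p (x + y) = e p x * e p y := by
  simp only [e_eq]; exact AddChar.map_add_eq_mul _ x y

lemma e_neg (x : ZMod p) : e p (-x) = (e p x)⁻¹ := by
  simp only [e_eq]; exact AddChar.map_neg_eq_inv _ x

lemma sum_e_mul {t : ZMod p} (ht : t ≠ 0) : ∑ a : ZMod p, e p (t * a) = 0 := by
  simp only [e_eq]
  exact AddChar.sum_eq_zero_of_ne_one (ZMod.isPrimitive_stdAddChar p ht)

lemma sum_e_mul_ne {t : ZMod p} (ht : t ≠ 0) :
    ∑ a ∈ univ.filter (fun a : ZMod p => a ≠ 0), e p (t * a) = -1 := by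
  have h0 := sum_e_mul ht
  rw [Finset.filter_ne', Finset.sum_erase_eq_sub (Finset.mem_univ 0), h0, mul_zero, e_zero]
  ring

lemma conj_e (x : ZMod p) : (starRingEnd ℂ) (e p x) = e p (-x) := by
  rw [e_neg]
  simp only [e]
  rw [← Complex.exp_conj, ← Complex.exp_neg]
  congr 1
  simp only [map_div₀, map_mul, Complex.conj_I, map_ofNat, Complex.conj_ofReal,
    Complex.conj_natCast]
  ring

lemma e_pow (m : ℕ) (x : ZMod p) : e p x ^ m = e p ((m : ZMod p) * x) := by
  simp only [e_eq]
  rw [← AddChar.map_nsmul_eq_pow, nsmul_eq_mul]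

/-- `T kk c = ∑_{a² = c} e(kk a)`. -/
noncomputable def T (p : ℕ) [NeZero p] (kk c : ZMod p) : ℂ :=
  ∑ a ∈ univ.filter (fun a : ZMod p => a * a = c), e p (kk * a)

lemma two_nz (hp : 3 < p) : (2 : ZMod p) ≠ 0 := by
  have : ((2 : ℕ) : ZMod p) ≠ 0 := by
    rw [Ne, ZMod.natCast_eq_zero_iff]
    intro h
    exact absurd (Nat.le_of_dvd (by norm_num) h) (by omega)
  simpa using this

lemma rootset (hp : 3 < p) {a : ZMod p} (ha : a ≠ 0) :
    univ.filter (fun x : ZMod p => x * x = a * a) = {a, -a} := by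
  ext x
  simp only [Finset.mem_filter, Finset.mem_univ, true_and, Finset.mem_insert,
    Finset.mem_singleton]
  constructor
  · intro h
    rcases mul_self_eq_mul_self_iff.mp h with h' | h'
    · exact Or.inl h'
    · exact Or.inr h'
  · rintro (rfl | rfl) <;> ring

lemma a_ne_neg (hp : 3 < p) {a : ZMod p} (ha : a ≠ 0) : a ≠ -a := by
  intro h
  apply ha
  have h2 : (2 : ZMod p) * a = 0 := by linear_combination h
  rcases mul_eq_zero.mp h2 with h' | h'
  · exact absurd h' (two_nz hp)
  · exact h'

lemma T_sq (hp : 3 < p) (kk : ZMod p) {a : ZMod p} (ha : a ≠ 0) :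
    T p kk (a * a) = e p (kk * a) + e p (-(kk * a)) := by
  rw [T, rootset hp ha, Finset.sum_pair (a_ne_neg hp ha), mul_neg]

lemma sum_T_pow (kk : ZMod p) (j : ℕ) :
    ∑ c ∈ univ.filter (fun c : ZMod p => c ≠ 0), T p kk c ^ (j + 1)
      = ∑ a ∈ univ.filter (fun a : ZMod p => a ≠ 0), T p kk (a * a) ^ j * e p (kk * a) := by
  have hmaps : ∀ a ∈ univ.filter (fun a : ZMod p => a ≠ 0),
      a * a ∈ univ.filter (fun c : ZMod p => c ≠ 0) := by
    intro a ha
    simp only [Finset.mem_filter, Finset.mem_univ, true_and] at ha ⊢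
    exact mul_ne_zero ha ha
  conv_rhs => rw [← Finset.sum_fiberwise_of_maps_to hmaps
    (fun a => T p kk (a * a) ^ j * e p (kk * a))]
  refine Finset.sum_congr rfl fun c hc => ?_
  simp only [Finset.mem_filter, Finset.mem_univ, true_and] at hc
  have hfil : (univ.filter (fun a : ZMod p => a ≠ 0)).filter (fun a => a * a = c)
      = univ.filter (fun a : ZMod p => a * a = c) := by
    ext x
    simp only [Finset.mem_filter, Finset.mem_univ, true_and]
    constructor
    · exact fun h => h.2
    · intro h
      refine ⟨fun h0 => hc ?_, h⟩
      rw [h0, mul_zero] at h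
      exact h.symm
  rw [hfil]
  have : ∀ x ∈ univ.filter (fun a : ZMod p => a * a = c),
      T p kk (x * x) ^ j * e p (kk * x) = T p kk c ^ j * e p (kk * x) := by
    intro x hx
    simp only [Finset.mem_filter, Finset.mem_univ, true_and] at hx
    rw [hx]
  rw [Finset.sum_congr rfl this, ← Finset.mul_sum, ← T, pow_succ, mul_comm (T p kk c ^ j)]

lemma card_nz : (univ.filter (fun a : ZMod p => a ≠ 0)).card = p - 1 := by
  rw [Finset.filter_ne', Finset.card_erase_of_mem (Finset.mem_univ 0), Finset.card_univ,
    ZMod.card]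

lemma conj_T (kk c : ZMod p) : (starRingEnd ℂ) (T p kk c) = T p kk c := by
  rw [T, map_sum]
  simp only [conj_e]
  refine Finset.sum_equiv (Equiv.neg (ZMod p)) (fun a => ?_) (fun a _ => ?_)
  · simp only [Finset.mem_filter, Finset.mem_univ, true_and, Equiv.neg_apply, neg_mul_neg]
  · rw [Equiv.neg_apply]
    congr 1
    ring

lemma small_nz {m : ℕ} (h1 : 0 < m) (h2 : m < p) : ((m : ℕ) : ZMod p) ≠ 0 := by
  rw [Ne, ZMod.natCast_eq_zero_iff]
  intro h
  exact absurd (Nat.le_of_dvd h1 h) (by omega)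

lemma three_nz (hp : 3 < p) : (3 : ZMod p) ≠ 0 := by
  simpa using small_nz (p := p) (m := 3) (by norm_num) (by omega)

lemma four_nz (hp : 3 < p) : (4 : ZMod p) ≠ 0 := by
  have hp4 : p ≠ 4 := by
    intro h
    have := (Fact.out : p.Prime)
    rw [h] at this
    norm_num at this
  simpa using small_nz (p := p) (m := 4) (by norm_num) (by omega)

lemma one_le_p : 1 ≤ p := (Fact.out : p.Prime).one_lt.le

lemma S1 {kk : ZMod p} (hk : kk ≠ 0) :
    ∑ c ∈ univ.filter (fun c : ZMod p => c ≠ 0), T p kk c = -1 := by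
  have h := sum_T_pow kk 0
  simp only [zero_add, pow_one, pow_zero, one_mul] at h
  rw [h, sum_e_mul_ne hk]

lemma S2 (hp : 3 < p) {kk : ZMod p} (hk : kk ≠ 0) :
    ∑ c ∈ univ.filter (fun c : ZMod p => c ≠ 0), T p kk c ^ 2 = (p : ℂ) - 2 := by
  rw [show (2:ℕ) = 1 + 1 from rfl, sum_T_pow kk 1]
  have key : ∀ a ∈ univ.filter (fun a : ZMod p => a ≠ 0),
      T p kk (a * a) ^ 1 * e p (kk * a) = e p (2 * kk * a) + 1 := by
    intro a ha
    simp only [Finset.mem_filter, Finset.mem_univ, true_and] at ha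
    have hzw : e p (kk * a) * e p (-(kk * a)) = 1 := by
      rw [← e_add (p := p) (kk * a) (-(kk * a))]
      rw [show kk * a + -(kk * a) = 0 by ring, e_zero]
    have h2 : e p (2 * kk * a) = e p (kk * a) * e p (kk * a) := by
      rw [show (2 * kk * a : ZMod p) = kk * a + kk * a by ring, e_add]
    rw [pow_one, T_sq hp kk ha, h2]
    linear_combination hzw
  rw [Finset.sum_congr rfl key, Finset.sum_add_distrib,
    sum_e_mul_ne (mul_ne_zero (two_nz hp) hk), Finset.sum_const, card_nz, nsmul_eq_mul, mul_one]
  have : ((p - 1 : ℕ) : ℂ) = (p : ℂ) - 1 := by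
    push_cast [Nat.cast_sub one_le_p]
    ring
  rw [this]
  ring

lemma S3 (hp : 3 < p) {kk : ZMod p} (hk : kk ≠ 0) :
    ∑ c ∈ univ.filter (fun c : ZMod p => c ≠ 0), T p kk c ^ 3 = -4 := by
  rw [show ∑ c ∈ univ.filter (fun c : ZMod p => c ≠ 0), T p kk c ^ 3 = _ from sum_T_pow kk 2]
  have key : ∀ a ∈ univ.filter (fun a : ZMod p => a ≠ 0),
      T p kk (a * a) ^ 2 * e p (kk * a)
        = e p (3 * kk * a) + 2 * e p (kk * a) + e p (-kk * a) := by
    intro a ha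
    simp only [Finset.mem_filter, Finset.mem_univ, true_and] at ha
    have hzw : e p (kk * a) * e p (-(kk * a)) = 1 := by
      rw [← e_add (p := p) (kk * a) (-(kk * a))]
      rw [show kk * a + -(kk * a) = 0 by ring, e_zero]
    have h3 : e p (3 * kk * a) = e p (kk * a) * (e p (kk * a) * e p (kk * a)) := by
      rw [show (3 * kk * a : ZMod p) = kk * a + (kk * a + kk * a) by ring, e_add, e_add]
    have hw : e p (-kk * a) = e p (-(kk * a)) := by
      congr 1
      ring
    rw [T_sq hp kk ha, h3, hw]
    linear_combination (2 * e p (kk * a) + e p (-(kk * a))) * hzw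
  rw [Finset.sum_congr rfl key, Finset.sum_add_distrib, Finset.sum_add_distrib,
    sum_e_mul_ne (mul_ne_zero (three_nz hp) hk), ← Finset.mul_sum, sum_e_mul_ne hk,
    sum_e_mul_ne (neg_ne_zero.mpr hk)]
  ring

lemma S4 (hp : 3 < p) {kk : ZMod p} (hk : kk ≠ 0) :
    ∑ c ∈ univ.filter (fun c : ZMod p => c ≠ 0), T p kk c ^ 4 = 3 * (p : ℂ) - 8 := by
  rw [show (4:ℕ) = 3 + 1 from rfl, sum_T_pow kk 3]
  have key : ∀ a ∈ univ.filter (fun a : ZMod p => a ≠ 0),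
      T p kk (a * a) ^ 3 * e p (kk * a)
        = e p (4 * kk * a) + 3 * e p (2 * kk * a) + e p (-(2 * kk) * a) + 3 := by
    intro a ha
    simp only [Finset.mem_filter, Finset.mem_univ, true_and] at ha
    have hzw : e p (kk * a) * e p (-(kk * a)) = 1 := by
      rw [← e_add (p := p) (kk * a) (-(kk * a))]
      rw [show kk * a + -(kk * a) = 0 by ring, e_zero]
    have h4 : e p (4 * kk * a) = e p (kk * a) * (e p (kk * a) * (e p (kk * a) * e p (kk * a))) := by
      rw [show (4 * kk * a : ZMod p) = kk * a + (kk * a + (kk * a + kk * a)) by ring,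
        e_add, e_add, e_add]
    have h2 : e p (2 * kk * a) = e p (kk * a) * e p (kk * a) := by
      rw [show (2 * kk * a : ZMod p) = kk * a + kk * a by ring, e_add]
    have hw2 : e p (-(2 * kk) * a) = e p (-(kk * a)) * e p (-(kk * a)) := by
      rw [show (-(2 * kk) * a : ZMod p) = -(kk * a) + -(kk * a) by ring, e_add]
    rw [T_sq hp kk ha, h4, h2, hw2]
    linear_combination (3 * e p (kk * a) * e p (kk * a)
      + 3 * (e p (kk * a) * e p (-(kk * a)) + 1)
      + e p (-(kk * a)) * e p (-(kk * a))) * hzw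
  rw [Finset.sum_congr rfl key, Finset.sum_add_distrib, Finset.sum_add_distrib,
    Finset.sum_add_distrib, sum_e_mul_ne (mul_ne_zero (four_nz hp) hk), ← Finset.mul_sum,
    sum_e_mul_ne (mul_ne_zero (two_nz hp) hk),
    sum_e_mul_ne (neg_ne_zero.mpr (mul_ne_zero (two_nz hp) hk)),
    Finset.sum_const, card_nz, nsmul_eq_mul]
  have : ((p - 1 : ℕ) : ℂ) = (p : ℂ) - 1 := by
    push_cast [Nat.cast_sub one_le_p]
    ring
  rw [this]
  ring

lemma inner_eq (hp : 3 < p) {kk nn m : ZMod p} (hk : kk ≠ 0) (hn : nn ≠ 0) (hm : m ≠ 0) :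
    ∑ a ∈ univ.filter (fun a : ZMod p => a ≠ 0),
      (1 : DirichletCharacter ℂ p) (m * a + nn * a⁻¹) * e p (kk * a)
      = -1 - T p kk (-nn * m⁻¹) := by
  have hch : ∀ x : ZMod p, (1 : DirichletCharacter ℂ p) x = if x = 0 then 0 else 1 := by
    intro x
    by_cases hx : x = 0
    · rw [if_pos hx, hx]
      exact MulChar.map_nonunit _ (by simp)
    · rw [MulChar.one_apply (isUnit_iff_ne_zero.mpr hx), if_neg hx]
  simp only [hch, ite_mul, one_mul, zero_mul]
  rw [Finset.sum_ite, Finset.sum_const_zero, zero_add]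
  have hset : (univ.filter (fun a : ZMod p => a ≠ 0)).filter
        (fun a => ¬ m * a + nn * a⁻¹ = 0)
      = (univ.filter (fun a : ZMod p => a ≠ 0)) \
        (univ.filter (fun a : ZMod p => a * a = -nn * m⁻¹)) := by
    ext x
    simp only [Finset.mem_filter, Finset.mem_univ, true_and, Finset.mem_sdiff]
    constructor
    · rintro ⟨hx0, hx⟩
      refine ⟨hx0, fun hxx => hx ?_⟩
      have hx1 : x⁻¹ * x = 1 := inv_mul_cancel₀ hx0
      have hm1 : m * m⁻¹ = 1 := mul_inv_cancel₀ hm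
      linear_combination (m * x⁻¹) * hxx - (m * x) * hx1 - (nn * x⁻¹) * hm1
    · rintro ⟨hx0, hx⟩
      refine ⟨hx0, fun heq => hx ?_⟩
      have hx1 : x⁻¹ * x = 1 := inv_mul_cancel₀ hx0
      have hm1 : m * m⁻¹ = 1 := mul_inv_cancel₀ hm
      linear_combination (m⁻¹ * x) * heq - x * x * hm1 - nn * m⁻¹ * hx1
  have hsub : univ.filter (fun a : ZMod p => a * a = -nn * m⁻¹)
      ⊆ univ.filter (fun a : ZMod p => a ≠ 0) := by
    intro x hx
    simp only [Finset.mem_filter, Finset.mem_univ, true_and] at hx ⊢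
    intro h0
    rw [h0, mul_zero] at hx
    apply (neg_ne_zero.mpr (mul_ne_zero hn (inv_ne_zero hm)))
    rw [neg_mul] at hx
    exact hx.symm
  rw [hset, Finset.sum_sdiff_eq_sub hsub, sum_e_mul_ne hk]
  rfl

lemma reindex {nn : ZMod p} (hn : nn ≠ 0) (f : ZMod p → ℂ) :
    ∑ m ∈ univ.filter (fun m : ZMod p => m ≠ 0), f (-nn * m⁻¹)
      = ∑ c ∈ univ.filter (fun c : ZMod p => c ≠ 0), f c := by
  refine Finset.sum_nbij' (fun m => -nn * m⁻¹) (fun c => -nn * c⁻¹) ?_ ?_ ?_ ?_ ?_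
  · intro a ha
    simp only [Finset.mem_filter, Finset.mem_univ, true_and] at ha ⊢
    exact mul_ne_zero (neg_ne_zero.mpr hn) (inv_ne_zero ha)
  · intro c hc
    simp only [Finset.mem_filter, Finset.mem_univ, true_and] at hc ⊢
    exact mul_ne_zero (neg_ne_zero.mpr hn) (inv_ne_zero hc)
  · intro a ha
    simp only [Finset.mem_filter, Finset.mem_univ, true_and] at ha
    field_simp
  · intro c hc
    simp only [Finset.mem_filter, Finset.mem_univ, true_and] at hc
    field_simp
  · intro a _
    rfl

lemma sumG1 (hp : 3 < p) {kk : ZMod p} (hk : kk ≠ 0) :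
    ∑ c ∈ univ.filter (fun c : ZMod p => c ≠ 0), (1 + T p kk c) ^ 2
      = 2 * (p : ℂ) - 5 := by
  have expand : ∀ c ∈ univ.filter (fun c : ZMod p => c ≠ 0),
      (1 + T p kk c) ^ 2 = 1 + 2 * T p kk c + T p kk c ^ 2 := fun c _ => by ring
  rw [Finset.sum_congr rfl expand, Finset.sum_add_distrib, Finset.sum_add_distrib,
    Finset.sum_const, card_nz, ← Finset.mul_sum, S1 hk, S2 hp hk, nsmul_eq_mul, mul_one]
  have : ((p - 1 : ℕ) : ℂ) = (p : ℂ) - 1 := by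
    push_cast [Nat.cast_sub one_le_p]
    ring
  rw [this]
  ring

lemma sumG2 (hp : 3 < p) {kk : ZMod p} (hk : kk ≠ 0) :
    ∑ c ∈ univ.filter (fun c : ZMod p => c ≠ 0), (1 + T p kk c) ^ 4
      = 10 * (p : ℂ) - 41 := by
  have expand : ∀ c ∈ univ.filter (fun c : ZMod p => c ≠ 0),
      (1 + T p kk c) ^ 4 = 1 + 4 * T p kk c + 6 * T p kk c ^ 2 + 4 * T p kk c ^ 3
        + T p kk c ^ 4 := fun c _ => by ring
  rw [Finset.sum_congr rfl expand, Finset.sum_add_distrib, Finset.sum_add_distrib,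
    Finset.sum_add_distrib, Finset.sum_add_distrib, Finset.sum_const, card_nz,
    ← Finset.mul_sum, ← Finset.mul_sum, ← Finset.mul_sum, S1 hk, S2 hp hk, S3 hp hk,
    S4 hp hk, nsmul_eq_mul, mul_one]
  have : ((p - 1 : ℕ) : ℂ) = (p : ℂ) - 1 := by
    push_cast [Nat.cast_sub one_le_p]
    ring
  rw [this]
  ring

lemma conj_char (ψ : DirichletCharacter ℂ p) (x : ZMod p) :
    (starRingEnd ℂ) (ψ x) = ψ x⁻¹ := by
  rw [← MulChar.inv_apply']
  exact MulChar.star_apply' ψ x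

lemma orth {m m' : ZMod p} (hm' : m' ≠ 0) :
    ∑ ψ : DirichletCharacter ℂ p, ψ m * (starRingEnd ℂ) (ψ m')
      = if m' = m then (p : ℂ) - 1 else 0 := by
  simp only [conj_char]
  have h := DirichletCharacter.sum_char_inv_mul_char_eq ℂ
    (a := m') (isUnit_iff_ne_zero.mpr hm') m
  rw [Nat.totient_prime Fact.out] at h
  calc ∑ ψ : DirichletCharacter ℂ p, ψ m * ψ m'⁻¹
      = ∑ ψ : DirichletCharacter ℂ p, ψ m'⁻¹ * ψ m :=
        Finset.sum_congr rfl fun ψ _ => mul_comm _ _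
    _ = _ := by
        rw [h]
        split_ifs with hcase
        · rw [Nat.cast_sub one_le_p, Nat.cast_one]
        · rfl

theorem stmt_11 (p : ℕ) [Fact p.Prime] (hp : 3 < p) (n k : ℤ)
    (hn : IsCoprime n (p : ℤ)) (hk : IsCoprime k (p : ℤ)) :
    ∑ ψ ∈ univ.filter (fun ψ : DirichletCharacter ℂ p => ψ ≠ 1),
      (‖(∑ m ∈ univ.filter (fun m : ZMod p => m ≠ 0),
        ψ m * (‖(∑ a ∈ univ.filter (fun a : ZMod p => a ≠ 0),
          (1 : DirichletCharacter ℂ p) ((m : ZMod p) * a + (n : ZMod p) * a⁻¹)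
            * e p ((k : ZMod p) * a))‖) ^ 2)‖) ^ 2
      = 6 * p ^ 2 - 31 * p + 16 := by
  have pp : p.Prime := Fact.out
  have hkk : ((k : ℤ) : ZMod p) ≠ 0 := by
    obtain ⟨u, v, huv⟩ := hk
    intro h0
    have h1 : ((u * k + v * (p : ℤ) : ℤ) : ZMod p) = 1 := by rw [huv]; exact Int.cast_one
    push_cast at h1
    rw [h0, ZMod.natCast_self] at h1
    simp at h1
  have hnn : ((n : ℤ) : ZMod p) ≠ 0 := by
    obtain ⟨u, v, huv⟩ := hn
    intro h0
    have h1 : ((u * n + v * (p : ℤ) : ℤ) : ZMod p) = 1 := by rw [huv]; exact Int.cast_one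
    push_cast at h1
    rw [h0, ZMod.natCast_self] at h1
    simp at h1
  set kk : ZMod p := ((k : ℤ) : ZMod p) with hkkdef
  set nn : ZMod p := ((n : ℤ) : ZMod p) with hnndef
  set nz : Finset (ZMod p) := univ.filter (fun x : ZMod p => x ≠ 0) with hnzdef
  set G : ZMod p → ℂ := fun m => (1 + T p kk (-nn * m⁻¹)) ^ 2 with hGdef
  have habs : ∀ z : ℂ, ((‖z‖ : ℂ)) ^ 2 = z * (starRingEnd ℂ) z := by
    intro z
    rw [← Complex.ofReal_pow, Complex.sq_norm, ← Complex.mul_conj]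
  have hGconj : ∀ m : ZMod p, (starRingEnd ℂ) (G m) = G m := by
    intro m
    simp only [hGdef, map_pow, map_add, map_one, conj_T]
  have hW : ∀ m ∈ nz, ((‖∑ a ∈ nz,
      (1 : DirichletCharacter ℂ p) (m * a + nn * a⁻¹) * e p (kk * a)‖ : ℂ)) ^ 2 = G m := by
    intro m hm
    rw [Finset.mem_filter] at hm
    rw [inner_eq hp hkk hnn hm.2, habs]
    simp only [map_sub, map_neg, map_one, conj_T]
    ring
  have hA : ∀ ψ : DirichletCharacter ℂ p,
      (∑ m ∈ nz, ψ m * ((‖∑ a ∈ nz,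
        (1 : DirichletCharacter ℂ p) (m * a + nn * a⁻¹) * e p (kk * a)‖ : ℂ)) ^ 2)
      = ∑ m ∈ nz, ψ m * G m :=
    fun ψ => Finset.sum_congr rfl fun m hm => by rw [hW m hm]
  rw [← Complex.ofReal_inj]
  push_cast
  calc ∑ ψ ∈ univ.filter (fun ψ : DirichletCharacter ℂ p => ψ ≠ 1),
        ((‖∑ m ∈ nz, ψ m * ((‖∑ a ∈ nz,
          (1 : DirichletCharacter ℂ p) (m * a + nn * a⁻¹) * e p (kk * a)‖ : ℂ)) ^ 2‖ : ℂ)) ^ 2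
      = ∑ ψ ∈ univ.filter (fun ψ : DirichletCharacter ℂ p => ψ ≠ 1),
        (∑ m ∈ nz, ψ m * G m) * (starRingEnd ℂ) (∑ m ∈ nz, ψ m * G m) := by
        refine Finset.sum_congr rfl fun ψ _ => ?_
        rw [hA ψ, habs]
    _ = 6 * (p : ℂ) ^ 2 - 31 * (p : ℂ) + 16 := by
        have htot : ∑ ψ : DirichletCharacter ℂ p,
            (∑ m ∈ nz, ψ m * G m) * (starRingEnd ℂ) (∑ m ∈ nz, ψ m * G m)
            = ((p : ℂ) - 1) * ∑ m ∈ nz, G m ^ 2 := by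
          calc ∑ ψ : DirichletCharacter ℂ p,
              (∑ m ∈ nz, ψ m * G m) * (starRingEnd ℂ) (∑ m ∈ nz, ψ m * G m)
              = ∑ ψ : DirichletCharacter ℂ p, ∑ m ∈ nz, ∑ m' ∈ nz,
                  (ψ m * (starRingEnd ℂ) (ψ m')) * (G m * G m') := by
                refine Finset.sum_congr rfl fun ψ _ => ?_
                rw [map_sum, Finset.sum_mul_sum]
                refine Finset.sum_congr rfl fun m _ => Finset.sum_congr rfl fun m' _ => ?_
                rw [map_mul, hGconj]
                ring
            _ = ∑ m ∈ nz, ∑ m' ∈ nz,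
                  (∑ ψ : DirichletCharacter ℂ p, ψ m * (starRingEnd ℂ) (ψ m'))
                    * (G m * G m') := by
                rw [Finset.sum_comm]
                refine Finset.sum_congr rfl fun m _ => ?_
                rw [Finset.sum_comm]
                refine Finset.sum_congr rfl fun m' _ => ?_
                rw [Finset.sum_mul]
            _ = ∑ m ∈ nz, ∑ m' ∈ nz,
                  (if m' = m then ((p : ℂ) - 1) else 0) * (G m * G m') := by
                refine Finset.sum_congr rfl fun m _ => Finset.sum_congr rfl fun m' hm' => ?_
                rw [orth (Finset.mem_filter.mp hm').2]
            _ = ∑ m ∈ nz, ((p : ℂ) - 1) * (G m * G m) := by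
                refine Finset.sum_congr rfl fun m hm => ?_
                simp only [ite_mul, zero_mul]
                rw [Finset.sum_ite_eq' nz m (fun m' => ((p : ℂ) - 1) * (G m * G m')),
                  if_pos hm]
            _ = ((p : ℂ) - 1) * ∑ m ∈ nz, G m ^ 2 := by
                rw [Finset.mul_sum]
                exact Finset.sum_congr rfl fun m _ => by ring
        have hone : (∑ m ∈ nz, (1 : DirichletCharacter ℂ p) m * G m) = ∑ m ∈ nz, G m := by
          refine Finset.sum_congr rfl fun m hm => ?_
          rw [MulChar.one_apply (isUnit_iff_ne_zero.mpr (Finset.mem_filter.mp hm).2), one_mul]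
        have hconjsum : (starRingEnd ℂ) (∑ m ∈ nz, G m) = ∑ m ∈ nz, G m := by
          rw [map_sum]
          exact Finset.sum_congr rfl fun m _ => hGconj m
        have hfilt : (univ : Finset (DirichletCharacter ℂ p)).filter (fun ψ => ¬ ψ ≠ 1)
            = {1} := by
          ext ψ
          simp [not_not]
        have hsplit := Finset.sum_filter_add_sum_filter_not
          (univ : Finset (DirichletCharacter ℂ p)) (fun ψ => ψ ≠ 1)
          (fun ψ => (∑ m ∈ nz, ψ m * G m) * (starRingEnd ℂ) (∑ m ∈ nz, ψ m * G m))
        rw [hfilt, Finset.sum_singleton, hone, hconjsum, htot] at hsplit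
        have hsum1 : ∑ m ∈ nz, G m = 2 * (p : ℂ) - 5 := by
          rw [hnzdef]
          simp only [hGdef]
          rw [reindex hnn (fun c => (1 + T p kk c) ^ 2)]
          exact sumG1 hp hkk
        have hsum2 : ∑ m ∈ nz, G m ^ 2 = 10 * (p : ℂ) - 41 := by
          rw [hnzdef]
          simp only [hGdef]
          have hexp : ∀ m ∈ univ.filter (fun x : ZMod p => x ≠ 0),
              ((1 + T p kk (-nn * m⁻¹)) ^ 2) ^ 2 = (1 + T p kk (-nn * m⁻¹)) ^ 4 :=
            fun m _ => by ring
          rw [Finset.sum_congr rfl hexp, reindex hnn (fun c => (1 + T p kk c) ^ 4)]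
          exact sumG2 hp hkk
        rw [hsum1, hsum2] at hsplit
        linear_combination hsplit
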